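/- In the setting of a cone K with dilation group g_λ and compatible unitary group U_λ on H̃, and a parameter space Y with an ℝ₊-action, the C*-subalgebra L_∞ of homogeneous elements (families B ∈ C_b(Y, B(H̃)) commuting with C_0(K) modulo the ideal J = C_0(Y, K(H̃)) and satisfying U_λ^{-1} B(λy) U_λ = B(y) for all λ) intersects the ideal J_0 of almost compact families (B with Bφ ∈ J for all φ ∈ C_0(K)) only in {0}. -/

import Mathlib

open Filter Topology ZeroAtInfty

section Cone

variable {K : Type*} [TopologicalSpace K] [LocallyCompactSpace K] [T2Space K]
variable {H : Type*} [NormedAddCommGroup H] [InnerProductSpace ℂ H] [CompleteSpace H]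

/-- The axioms of a cone: a distinguished vertex together with a multiplicative
dilation group `g_λ` (`λ > 0`) fixing the vertex, such that every compact set is moved
into any given neighborhood of the vertex by all sufficiently small dilations. -/
structure ConeStruct (K : Type*) [TopologicalSpace K] where
  vertex : K
  g : ℝ → K → K
  g_cont : ∀ l : ℝ, 0 < l → Continuous (g l)
  g_one : g 1 = id
  g_mul : ∀ l m : ℝ, 0 < l → 0 < m → ∀ z, g (l * m) z = g l (g m z)
  g_vertex : ∀ l : ℝ, 0 < l → g l vertex = vertex
  g_shrink : ∀ Q : Set K, IsCompact Q → ∀ V ∈ 𝓝 vertex,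
    ∃ ε > (0:ℝ), ∀ l : ℝ, 0 < l → l < ε → g l '' Q ⊆ V

/-- The localizing class `F₀` at the vertex of the cone: compactly supported continuous
functions with values in `[0,1]` equal to `1` in a neighborhood of the vertex. -/
def coneLocClass (c : ConeStruct K) : Set C₀(K, ℂ) :=
  {φ | HasCompactSupport ⇑φ ∧ (∀ z, (φ z).re ∈ Set.Icc (0:ℝ) 1 ∧ (φ z).im = 0) ∧
    ∃ V ∈ 𝓝 c.vertex, ∀ z ∈ V, φ z = 1}

variable (π : C₀(K, ℂ) →⋆ₙₐ[ℂ] (H →L[ℂ] H))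

/-- A strongly continuous one-parameter unitary group `U_λ` (`λ > 0`). -/
def IsUnitaryDilGroup (U : ℝ → H →L[ℂ] H) : Prop :=
  U 1 = 1 ∧ (∀ l m : ℝ, 0 < l → 0 < m → U (l * m) = U l ∘L U m) ∧
    (∀ l : ℝ, 0 < l → ∀ v, ‖U l v‖ = ‖v‖) ∧
    ∀ v : H, ContinuousOn (fun l => U l v) (Set.Ioi (0:ℝ))

/-- Compatibility of the unitary group with the module structure:
`U_λ φ U_λ⁻¹ = φ ∘ g_λ`, stated as `π(φ ∘ g_λ) U_λ = U_λ π(φ)`. -/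
def DilCompatible (c : ConeStruct K) (U : ℝ → H →L[ℂ] H) : Prop :=
  ∀ l : ℝ, 0 < l → ∀ φ ψ : C₀(K, ℂ), (∀ z, ψ z = φ (c.g l z)) →
    (π ψ) ∘L (U l) = (U l) ∘L (π φ)

/-- The localization condition at the vertex: the localizing class `F₀`, directed by
`φ ≺ ψ ↔ φψ = ψ`, converges strongly to `0`. -/
def VertexLocConv (c : ConeStruct K) : Prop :=
  ∀ (v : H) (ε : ℝ), 0 < ε →
    ∃ φ ∈ coneLocClass c, ∀ ψ ∈ coneLocClass c, φ * ψ = ψ → ‖π ψ v‖ < ε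

/-- Nondegeneracy: the strong closure of the image of `C₀(K)` contains the identity. -/
def NondegenerateModule : Prop :=
  ∀ (v : H) (ε : ℝ), 0 < ε → ∃ φ : C₀(K, ℂ), ‖π φ v - v‖ < ε

end Cone

section Families

variable {K : Type*} [TopologicalSpace K] [LocallyCompactSpace K] [T2Space K]
variable {H : Type*} [NormedAddCommGroup H] [InnerProductSpace ℂ H] [CompleteSpace H]
variable {Y : Type*} [TopologicalSpace Y]

/-- Membership in the ideal `J = C₀(Y, K(H))`: compact-valued families tending to zero
in norm at infinity. -/
def MemJIdeal (D : Y → H →L[ℂ] H) : Prop :=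
  (∀ y, IsCompactOperator ⇑(D y)) ∧ Tendsto (fun y => ‖D y‖) (cocompact Y) (𝓝 0)

variable (π : C₀(K, ℂ) →⋆ₙₐ[ℂ] (H →L[ℂ] H))

/-- Membership in the algebra `L` of bounded continuous families commuting with the
`C₀(K)`-action modulo the ideal `J`. -/
def MemLAlg (B : Y → H →L[ℂ] H) : Prop :=
  Continuous B ∧ (∃ M, ∀ y, ‖B y‖ ≤ M) ∧
    ∀ φ : C₀(K, ℂ), MemJIdeal (fun y => B y ∘L π φ - π φ ∘L B y)

/-- Membership in the ideal `J₀ ⊂ L` of almost compact families: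
`Bφ ∈ J` for every `φ ∈ C₀(K)`. -/
def MemAlmostCompact (B : Y → H →L[ℂ] H) : Prop :=
  ∀ φ : C₀(K, ℂ), MemJIdeal (fun y => B y ∘L π φ)

/-- Homogeneity of a family: `U_λ⁻¹ B(λy) U_λ = B(y)`. -/
def IsHomogeneousFamily (U : ℝ → H →L[ℂ] H) (act : ℝ → Y → Y)
    (B : Y → H →L[ℂ] H) : Prop :=
  ∀ l : ℝ, 0 < l → ∀ y, (U l⁻¹) ∘L B (act l y) ∘L (U l) = B y

end Families


section Aux

open Filter Topology ZeroAtInfty Metric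

variable {K : Type*} [TopologicalSpace K] [LocallyCompactSpace K] [T2Space K]
variable {H : Type*} [NormedAddCommGroup H] [InnerProductSpace ℂ H] [CompleteSpace H]

local notation "⟪" x ", " y "⟫" => @inner ℂ _ _ x y

lemma ConeStruct.g_inv_g (c : ConeStruct K) {l : ℝ} (hl : 0 < l) (z : K) :
    c.g l⁻¹ (c.g l z) = z := by
  rw [← c.g_mul l⁻¹ l (inv_pos.mpr hl) hl, inv_mul_cancel₀ hl.ne', c.g_one, id]

open scoped Classical in
/-- Composition of a compactly supported `C₀` function with the dilation `g l`. -/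
noncomputable def dilC0 (c : ConeStruct K) (l : ℝ) (χ : C₀(K, ℂ)) : C₀(K, ℂ) :=
  if h : 0 < l ∧ HasCompactSupport ⇑χ then
    { toFun := fun z => χ (c.g l z)
      continuous_toFun := χ.continuous.comp (c.g_cont l h.1)
      zero_at_infty' := by
        rw [Filter.tendsto_def]
        intro s hs
        rw [Filter.mem_cocompact]
        refine ⟨c.g l⁻¹ '' tsupport ⇑χ, h.2.image (c.g_cont l⁻¹ (inv_pos.mpr h.1)), ?_⟩
        intro z hz
        by_cases h0 : χ (c.g l z) = 0
        · show χ (c.g l z) ∈ s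
          rw [h0]; exact mem_of_mem_nhds hs
        · exact absurd ⟨c.g l z, subset_tsupport _ h0, c.g_inv_g h.1 z⟩ hz }
  else 0

open scoped Classical in
lemma dilC0_apply (c : ConeStruct K) {l : ℝ} (hl : 0 < l) {χ : C₀(K, ℂ)}
    (hχ : HasCompactSupport ⇑χ) (z : K) : dilC0 c l χ z = χ (c.g l z) := by
  rw [dilC0, dif_pos ⟨hl, hχ⟩]; rfl

lemma dilC0_mem (c : ConeStruct K) {l : ℝ} (hl : 0 < l) {χ : C₀(K, ℂ)}
    (hχ : χ ∈ coneLocClass c) : dilC0 c l χ ∈ coneLocClass c := by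
  obtain ⟨hsupp, hval, V, hV, hone⟩ := hχ
  refine ⟨?_, fun z => by rw [dilC0_apply c hl hsupp]; exact hval _,
      c.g l ⁻¹' V, ?_, fun z hz => by rw [dilC0_apply c hl hsupp]; exact hone _ hz⟩
  · have himg : IsCompact (c.g l⁻¹ '' tsupport ⇑χ) :=
      hsupp.image (c.g_cont l⁻¹ (inv_pos.mpr hl))
    refine himg.of_isClosed_subset isClosed_closure (closure_minimal ?_ himg.isClosed)
    intro z hz
    rw [Function.mem_support, dilC0_apply c hl hsupp] at hz
    exact ⟨c.g l z, subset_tsupport _ hz, c.g_inv_g hl z⟩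
  · have : c.g l c.vertex = c.vertex := c.g_vertex l hl
    exact (c.g_cont l hl).continuousAt.preimage_mem_nhds (by rwa [this])

lemma dilC0_absorb (c : ConeStruct K) {φ₀ χ : C₀(K, ℂ)} (hφ₀ : φ₀ ∈ coneLocClass c)
    (hχ : χ ∈ coneLocClass c) :
    ∃ L : ℝ, 1 ≤ L ∧ ∀ l : ℝ, L ≤ l → φ₀ * dilC0 c l χ = dilC0 c l χ := by
  obtain ⟨_, _, V, hV, hone⟩ := hφ₀
  obtain ⟨ε, hε, hshr⟩ := c.g_shrink (tsupport ⇑χ) hχ.1 V hV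
  refine ⟨max 1 (2 / ε), le_max_left _ _, fun l hl => ?_⟩
  have hl1 : (1:ℝ) ≤ l := le_trans (le_max_left _ _) hl
  have hl0 : 0 < l := lt_of_lt_of_le zero_lt_one hl1
  have hinv0 : 0 < l⁻¹ := inv_pos.mpr hl0
  have hinvlt : l⁻¹ < ε := by
    have h2 : 2 / ε ≤ l := le_trans (le_max_right _ _) hl
    rw [div_le_iff₀ hε] at h2
    nlinarith [mul_nonneg hinv0.le (by linarith : (0:ℝ) ≤ l * ε - 2),
      inv_mul_cancel₀ hl0.ne']
  ext z
  show φ₀ z * dilC0 c l χ z = dilC0 c l χ z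
  rw [dilC0_apply c hl0 hχ.1]
  by_cases h0 : χ (c.g l z) = 0
  · rw [h0, mul_zero]
  · have hz : z ∈ V := hshr l⁻¹ hinv0 hinvlt
      ⟨c.g l z, subset_tsupport _ h0, c.g_inv_g hl0 z⟩
    rw [hone z hz, one_mul]

lemma coneLocClass.norm_val_le_one {c : ConeStruct K} {χ : C₀(K, ℂ)}
    (h : χ ∈ coneLocClass c) (z : K) : ‖χ z‖ ≤ 1 := by
  obtain ⟨h01, him⟩ := h.2.1 z
  have : χ z = ((χ z).re : ℂ) := Complex.ext rfl (by simp [him])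
  rw [this, Complex.norm_real, Real.norm_eq_abs, abs_le]
  exact ⟨by linarith [h01.1], h01.2⟩

lemma coneLocClass.norm_le_one {c : ConeStruct K} {χ : C₀(K, ℂ)}
    (h : χ ∈ coneLocClass c) : ‖χ‖ ≤ 1 := by
  rw [← ZeroAtInftyContinuousMap.norm_toBCF_eq_norm]
  exact (BoundedContinuousFunction.norm_le zero_le_one).mpr
    fun z => coneLocClass.norm_val_le_one h z

lemma coneLocClass.star_eq {c : ConeStruct K} {χ : C₀(K, ℂ)}
    (h : χ ∈ coneLocClass c) : star χ = χ := by
  ext z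
  rw [ZeroAtInftyContinuousMap.star_apply]
  exact Complex.conj_eq_iff_im.mpr (h.2.1 z).2

/-- A compact operator sends a bounded weakly-null family to a norm-null family. -/
lemma isCompactOperator_norm_tendsto (T : H →L[ℂ] H) (hT : IsCompactOperator ⇑T)
    (x : ℝ → H) (C0 : ℝ) (hb : ∀ᶠ l in atTop, ‖x l‖ ≤ C0)
    (hw : ∀ w : H, Tendsto (fun l => ⟪w, x l⟫) atTop (𝓝 0)) :
    Tendsto (fun l => ‖T (x l)‖) atTop (𝓝 0) := by
  by_contra hcon
  rw [Metric.tendsto_atTop] at hcon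
  push_neg at hcon
  obtain ⟨ε, hε, hfr⟩ := hcon
  have hT' : IsCompactOperator ⇑(T : H →ₗ[ℂ] H) := by
    rwa [ContinuousLinearMap.coe_coe]
  have hKc : IsCompact (closure ((T : H →ₗ[ℂ] H) '' Metric.closedBall 0 (|C0| + 1))) :=
    hT'.isCompact_closure_image_closedBall (𝕜₁ := ℂ) (|C0| + 1)
  -- extract a sequence
  have hsel : ∀ n : ℕ, ∃ l : ℝ, (n : ℝ) ≤ l ∧ ‖x l‖ ≤ C0 ∧ ε ≤ dist ‖T (x l)‖ 0 := by
    intro n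
    obtain ⟨N, hN⟩ := hb.exists_forall_of_atTop
    obtain ⟨l, hl, hdist⟩ := hfr (max (n : ℝ) N)
    exact ⟨l, le_trans (le_max_left _ _) hl, hN l (le_trans (le_max_right _ _) hl), hdist⟩
  choose l hln hlb hld using hsel
  have hlt : Tendsto l atTop atTop :=
    tendsto_atTop_mono hln tendsto_natCast_atTop_atTop
  have hmem : ∀ n, T (x (l n)) ∈
      closure ((T : H →ₗ[ℂ] H) '' Metric.closedBall 0 (|C0| + 1)) := by
    intro n
    refine subset_closure ⟨x (l n), ?_, rfl⟩
    rw [Metric.mem_closedBall, dist_zero_right]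
    exact le_trans (hlb n) (le_trans (le_abs_self C0) (by linarith))
  obtain ⟨a, _, φ, hφ, hconv⟩ := hKc.tendsto_subseq hmem
  have ha : a = 0 := by
    rw [← @inner_self_eq_zero ℂ]
    have h1 : Tendsto (fun k => ⟪a, T (x (l (φ k)))⟫) atTop (𝓝 ⟪a, a⟫) :=
      (Tendsto.inner tendsto_const_nhds hconv)
    have h2 : Tendsto (fun k => ⟪a, T (x (l (φ k)))⟫) atTop (𝓝 0) := by
      have := (hw (ContinuousLinearMap.adjoint T a)).comp
        (hlt.comp hφ.tendsto_atTop)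
      refine this.congr fun k => ?_
      exact ContinuousLinearMap.adjoint_inner_left T (x (l (φ k))) a
    exact tendsto_nhds_unique h1 h2
  subst ha
  have hnorm : Tendsto (fun k => ‖T (x (l (φ k)))‖) atTop (𝓝 0) := by
    simpa using hconv.norm
  obtain ⟨k, hk⟩ := (hnorm.eventually (gt_mem_nhds hε)).exists
  have := hld (φ k)
  rw [dist_zero_right, Real.norm_eq_abs, abs_of_nonneg (norm_nonneg _)] at this
  linarith

end Aux

/-- In the cone setting with a parameter space `Y` carrying an
`ℝ₊`-action, a homogeneous element of `L` which is almost compact must vanish: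
`L_∞ ∩ J₀ = {0}`. -/
theorem homogeneous_almost_compact_eq_zero
    {K : Type*} [TopologicalSpace K] [LocallyCompactSpace K] [T2Space K]
    {H : Type*} [NormedAddCommGroup H] [InnerProductSpace ℂ H] [CompleteSpace H]
    {Y : Type*} [TopologicalSpace Y]
    (c : ConeStruct K) (π : C₀(K, ℂ) →⋆ₙₐ[ℂ] (H →L[ℂ] H))
    (hnd : NondegenerateModule π) (hloc : VertexLocConv π c)
    (U : ℝ → H →L[ℂ] H) (hU : IsUnitaryDilGroup U) (hcomp : DilCompatible π c U)
    (act : ℝ → Y → Y) (hact_cont : ∀ l : ℝ, 0 < l → Continuous (act l))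
    (hact_one : act 1 = id)
    (hact_mul : ∀ l m : ℝ, 0 < l → 0 < m → ∀ y, act (l * m) y = act l (act m y))
    (B : Y → H →L[ℂ] H) (hB : MemLAlg π B)
    (hhom : IsHomogeneousFamily U act B) (hJ0 : MemAlmostCompact π B) :
    ∀ y, B y = 0 := by
  classical
  obtain ⟨hU1, hUmul, hUiso, hUcont⟩ := hU
  obtain ⟨hBcont, ⟨M, hM⟩, hcommJ⟩ := hB
  obtain ⟨χ₀, hχ₀, -⟩ := hloc 0 1 one_pos
  intro y
  have hM0 : 0 ≤ M := le_trans (norm_nonneg _) (hM y)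
  -- Main claim: `B y` kills the range of `π χ'` for every localizer `χ'`.
  have claim : ∀ χ' ∈ coneLocClass c, ∀ v : H, B y (π χ' v) = 0 := by
    intro χ' hχ' v
    set x : ℝ → H := fun l => U l (π χ' v) with hxdef
    have hkey : ∀ l : ℝ, 0 < l → ‖B y (π χ' v)‖ = ‖B (act l y) (x l)‖ := by
      intro l hl
      conv_lhs => rw [← hhom l hl y]
      rw [ContinuousLinearMap.comp_apply, ContinuousLinearMap.comp_apply]
      exact hUiso l⁻¹ (inv_pos.mpr hl) _
    have hxeq : ∀ l : ℝ, 0 < l → x l = π (dilC0 c l χ') (U l v) := by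
      intro l hl
      have h2 := congrArg (fun A : H →L[ℂ] H => A v)
        (hcomp l hl χ' (dilC0 c l χ') (fun z => dilC0_apply c hl hχ'.1 z))
      simp only [ContinuousLinearMap.comp_apply] at h2
      exact h2.symm
    obtain ⟨L, hL1, hLabs⟩ := dilC0_absorb c hχ' hχ'
    have hxabs : ∀ l : ℝ, L ≤ l → x l = π χ' (x l) := by
      intro l hl
      have hl0 : 0 < l := lt_of_lt_of_le zero_lt_one (le_trans hL1 hl)
      have e1 : π (dilC0 c l χ') = π χ' * π (dilC0 c l χ') := by
        rw [← map_mul, hLabs l hl]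
      calc x l = π (dilC0 c l χ') (U l v) := hxeq l hl0
        _ = (π χ' * π (dilC0 c l χ')) (U l v) := by rw [← e1]
        _ = π χ' (π (dilC0 c l χ') (U l v)) := by
              rw [ContinuousLinearMap.mul_apply]
        _ = π χ' (x l) := by rw [← hxeq l hl0]
    have hxnorm : ∀ l : ℝ, 0 < l → ‖x l‖ = ‖π χ' v‖ := fun l hl => hUiso l hl _
    -- weak nullity of the family `x`
    have hweak : ∀ w : H, Filter.Tendsto (fun l => (inner ℂ w (x l) : ℂ))
        Filter.atTop (𝓝 0) := by
      intro w
      rw [Metric.tendsto_atTop]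
      intro ε hε
      have hε'pos : 0 < ε / (‖v‖ + 1) := by positivity
      obtain ⟨φ₀, hφ₀, hφ₀small⟩ := hloc w (ε / (‖v‖ + 1)) hε'pos
      obtain ⟨L₁, hL₁1, hL₁⟩ := dilC0_absorb c hφ₀ hχ'
      refine ⟨max L₁ 1, fun l hl => ?_⟩
      have hl0 : 0 < l := lt_of_lt_of_le zero_lt_one (le_trans (le_max_right _ _) hl)
      have hl1 : L₁ ≤ l := le_trans (le_max_left _ _) hl
      have hsmall : ‖π (dilC0 c l χ') w‖ < ε / (‖v‖ + 1) :=
        hφ₀small _ (dilC0_mem c hl0 hχ') (hL₁ l hl1)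
      have hsa : star (π (dilC0 c l χ')) = π (dilC0 c l χ') := by
        rw [← map_star, coneLocClass.star_eq (dilC0_mem c hl0 hχ')]
      have hinner : (inner ℂ w (x l) : ℂ) = inner ℂ (π (dilC0 c l χ') w) (U l v) := by
        rw [hxeq l hl0, ← ContinuousLinearMap.adjoint_inner_left]
        congr 1
        rw [← ContinuousLinearMap.star_eq_adjoint, hsa]
      rw [dist_zero_right, hinner]
      calc ‖(inner ℂ (π (dilC0 c l χ') w) (U l v) : ℂ)‖
          ≤ ‖π (dilC0 c l χ') w‖ * ‖U l v‖ := norm_inner_le_norm _ _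
        _ = ‖π (dilC0 c l χ') w‖ * ‖v‖ := by rw [hUiso l hl0]
        _ ≤ (ε / (‖v‖ + 1)) * ‖v‖ :=
            mul_le_mul_of_nonneg_right hsmall.le (norm_nonneg _)
        _ < (ε / (‖v‖ + 1)) * (‖v‖ + 1) :=
            (mul_lt_mul_iff_right₀ hε'pos).mpr (by linarith)
        _ = ε := div_mul_cancel₀ ε (by positivity)
    -- the two cases
    have hnn : ∀ ε : ℝ, 0 < ε → ‖B y (π χ' v)‖ < ε := by
      intro ε hε
      have hC0 : 0 ≤ ‖π χ' v‖ := norm_nonneg _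
      by_cases hesc : ∀ Q : Set Y, IsCompact Q →
        ∀ᶠ l in (Filter.atTop : Filter ℝ), act l y ∉ Q
      · -- orbit escapes to infinity: use the decay of `‖B ∘ π χ'‖`
        have htend : Filter.Tendsto (fun l : ℝ => act l y) Filter.atTop (cocompact Y) := by
          rw [hasBasis_cocompact.tendsto_right_iff]
          intro Q hQ
          exact (hesc Q hQ).mono fun l hl => hl
        have h0 : Filter.Tendsto (fun l : ℝ => ‖B (act l y) ∘L π χ'‖)
            Filter.atTop (𝓝 0) := (hJ0 χ').2.comp htend
        have hev : ∀ᶠ l : ℝ in Filter.atTop,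
            ‖B (act l y) ∘L π χ'‖ < ε / (‖π χ' v‖ + 1) :=
          h0.eventually (gt_mem_nhds (by positivity))
        obtain ⟨l, hlge, hlsmall⟩ := ((Filter.eventually_ge_atTop (max L 1)).and hev).exists
        have hl0 : 0 < l := lt_of_lt_of_le zero_lt_one (le_trans (le_max_right _ _) hlge)
        have hlL : L ≤ l := le_trans (le_max_left _ _) hlge
        calc ‖B y (π χ' v)‖ = ‖B (act l y) (x l)‖ := hkey l hl0
          _ = ‖(B (act l y) ∘L π χ') (x l)‖ := by
              rw [ContinuousLinearMap.comp_apply, ← hxabs l hlL]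
          _ ≤ ‖B (act l y) ∘L π χ'‖ * ‖x l‖ := ContinuousLinearMap.le_opNorm _ _
          _ ≤ (ε / (‖π χ' v‖ + 1)) * ‖π χ' v‖ := by
              rw [hxnorm l hl0]
              exact mul_le_mul_of_nonneg_right hlsmall.le hC0
          _ < (ε / (‖π χ' v‖ + 1)) * (‖π χ' v‖ + 1) :=
              (mul_lt_mul_iff_right₀ (by positivity)).mpr (by linarith)
          _ = ε := div_mul_cancel₀ ε (by positivity)
      · -- orbit has a cluster point `z₀`: use compactness of `B z₀ ∘ π χ'`
        push_neg at hesc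
        obtain ⟨Q, hQc, hfq0⟩ := hesc
        have hfq : ∃ᶠ l in (Filter.atTop : Filter ℝ), act l y ∈ Q :=
          hfq0.mono fun l hl => hl
        have hfq2 : ∃ᶠ z in Filter.map (fun l : ℝ => act l y) Filter.atTop, z ∈ Q :=
          Filter.frequently_map.mpr hfq
        have hNB : (Filter.map (fun l : ℝ => act l y) Filter.atTop ⊓ 𝓟 Q).NeBot := by
          have := Filter.frequently_iff_neBot.mp hfq2
          rwa [Set.setOf_mem_eq] at this
        haveI := hNB
        obtain ⟨z₀, hz₀Q, hcl⟩ :=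
          hQc (f := Filter.map (fun l : ℝ => act l y) Filter.atTop ⊓ 𝓟 Q) inf_le_right
        have hmc : MapClusterPt z₀ (Filter.atTop : Filter ℝ) (fun l => act l y) :=
          hcl.mono inf_le_left
        have hfr := mapClusterPt_iff_frequently.mp hmc
        set T : H →L[ℂ] H := B z₀ ∘L π χ' with hTdef
        have hTc : IsCompactOperator ⇑T := (hJ0 χ').1 z₀
        have hTx : Filter.Tendsto (fun l => ‖T (x l)‖) Filter.atTop (𝓝 0) :=
          isCompactOperator_norm_tendsto T hTc x (‖π χ' v‖)
            ((Filter.eventually_gt_atTop 0).mono fun l hl => (hxnorm l hl).le) hweak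
        have hδ : 0 < ε / (2 * (‖π χ' v‖ + 1)) := by positivity
        have hsnb : {z : Y | ‖B z - B z₀‖ < ε / (2 * (‖π χ' v‖ + 1))} ∈ 𝓝 z₀ := by
          have hco : Continuous fun z : Y => ‖B z - B z₀‖ :=
            (hBcont.sub continuous_const).norm
          exact (isOpen_lt hco continuous_const).mem_nhds (by simp [hδ])
        have hev : ∀ᶠ l : ℝ in Filter.atTop, max L 1 ≤ l ∧ ‖T (x l)‖ < ε / 2 :=
          (Filter.eventually_ge_atTop _).and (hTx.eventually (gt_mem_nhds (by positivity)))
        obtain ⟨l, hlδ, hlge, hlT⟩ := ((hfr _ hsnb).and_eventually hev).exists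
        have hl0 : 0 < l := lt_of_lt_of_le zero_lt_one (le_trans (le_max_right _ _) hlge)
        have hlL : L ≤ l := le_trans (le_max_left _ _) hlge
        have hTxl : B z₀ (x l) = T (x l) := by
          rw [hTdef, ContinuousLinearMap.comp_apply, ← hxabs l hlL]
        have hmain : ‖B y (π χ' v)‖ ≤ ε / (2 * (‖π χ' v‖ + 1)) * ‖π χ' v‖ + ε / 2 := by
          calc ‖B y (π χ' v)‖ = ‖B (act l y) (x l)‖ := hkey l hl0
            _ = ‖(B (act l y) - B z₀) (x l) + B z₀ (x l)‖ := by
                congr 1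
                simp [ContinuousLinearMap.sub_apply]
            _ ≤ ‖(B (act l y) - B z₀) (x l)‖ + ‖B z₀ (x l)‖ := norm_add_le _ _
            _ ≤ ε / (2 * (‖π χ' v‖ + 1)) * ‖π χ' v‖ + ε / 2 := by
                refine add_le_add ?_ ?_
                · calc ‖(B (act l y) - B z₀) (x l)‖
                      ≤ ‖B (act l y) - B z₀‖ * ‖x l‖ := ContinuousLinearMap.le_opNorm _ _
                    _ ≤ ε / (2 * (‖π χ' v‖ + 1)) * ‖π χ' v‖ := by
                        rw [hxnorm l hl0]
                        exact mul_le_mul_of_nonneg_right hlδ.le hC0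
                · rw [hTxl]; exact hlT.le
        have hlt : ε / (2 * (‖π χ' v‖ + 1)) * ‖π χ' v‖ < ε / 2 := by
          rw [div_mul_eq_mul_div, div_lt_div_iff₀ (by positivity) (by positivity)]
          nlinarith
        linarith
    by_contra hne
    exact lt_irrefl _ (hnn _ (norm_pos_iff.mpr hne))
  -- Conclude `B y = 0` using nondegeneracy
  ext v
  rw [ContinuousLinearMap.zero_apply]
  have hfin : ∀ ε : ℝ, 0 < ε → ‖B y v‖ ≤ M * ε + 2 * M * ε * ‖v‖ := by
    intro ε hε
    obtain ⟨φ, hφ⟩ := hnd v ε hε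
    have hzi := φ.zero_at_infty' (Metric.ball_mem_nhds (0 : ℂ) hε)
    rw [Filter.mem_map, Filter.mem_cocompact] at hzi
    obtain ⟨Q, hQc, hQsub⟩ := hzi
    have hQsmall : ∀ z, z ∉ Q → ‖φ z‖ < ε := by
      intro z hz
      have := hQsub hz
      rwa [Set.mem_preimage, Metric.mem_ball, dist_zero_right] at this
    obtain ⟨-, -, V₀, hV₀, hone⟩ := id hχ₀
    obtain ⟨ε₀, hε₀, hshr⟩ := c.g_shrink Q hQc V₀ hV₀
    have hm0 : 0 < ε₀ / 2 := by positivity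
    have hmlt : ε₀ / 2 < ε₀ := half_lt_self hε₀
    set χ' := dilC0 c (ε₀ / 2) χ₀ with hχ'def
    have hχ'mem : χ' ∈ coneLocClass c := dilC0_mem c hm0 hχ₀
    have hχ'one : ∀ z ∈ Q, χ' z = 1 := by
      intro z hz
      rw [hχ'def, dilC0_apply c hm0 hχ₀.1]
      exact hone _ (hshr (ε₀ / 2) hm0 hmlt ⟨z, hz, rfl⟩)
    have hsup : ‖φ - χ' * φ‖ ≤ 2 * ε := by
      rw [← ZeroAtInftyContinuousMap.norm_toBCF_eq_norm]
      refine (BoundedContinuousFunction.norm_le (by positivity)).mpr fun z => ?_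
      show ‖(φ - χ' * φ) z‖ ≤ 2 * ε
      rw [ZeroAtInftyContinuousMap.sub_apply, ZeroAtInftyContinuousMap.mul_apply]
      by_cases hzQ : z ∈ Q
      · rw [hχ'one z hzQ, one_mul, sub_self, norm_zero]; positivity
      · have h1 : ‖φ z‖ < ε := hQsmall z hzQ
        have h2 : ‖(1 : ℂ) - χ' z‖ ≤ 2 := by
          calc ‖(1 : ℂ) - χ' z‖ ≤ ‖(1 : ℂ)‖ + ‖χ' z‖ := norm_sub_le _ _
            _ ≤ 1 + 1 := by
                rw [norm_one]
                exact add_le_add le_rfl (coneLocClass.norm_val_le_one hχ'mem z)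
            _ = 2 := by norm_num
        calc ‖φ z - χ' z * φ z‖ = ‖(1 - χ' z) * φ z‖ := by ring_nf
          _ ≤ ‖(1 : ℂ) - χ' z‖ * ‖φ z‖ := norm_mul_le _ _
          _ ≤ 2 * ε := mul_le_mul h2 h1.le (norm_nonneg _) (by norm_num)
    have hzero : B y (π (χ' * φ) v) = 0 := by
      rw [map_mul, ContinuousLinearMap.mul_apply]
      exact claim χ' hχ'mem (π φ v)
    have hsplit : B y v = B y (v - π φ v) + B y (π φ v - π (χ' * φ) v) +
        B y (π (χ' * φ) v) := by
      rw [← map_add, ← map_add]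
      congr 1
      abel
    calc ‖B y v‖ = ‖B y (v - π φ v) + B y (π φ v - π (χ' * φ) v)‖ := by
          rw [hsplit, hzero, add_zero]
      _ ≤ ‖B y (v - π φ v)‖ + ‖B y (π φ v - π (χ' * φ) v)‖ := norm_add_le _ _
      _ ≤ M * ε + 2 * M * ε * ‖v‖ := by
          refine add_le_add ?_ ?_
          · calc ‖B y (v - π φ v)‖ ≤ ‖B y‖ * ‖v - π φ v‖ :=
                ContinuousLinearMap.le_opNorm _ _
              _ ≤ M * ε := by
                  refine mul_le_mul (hM y) ?_ (norm_nonneg _) hM0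
                  rw [← neg_sub, norm_neg]
                  exact hφ.le
          · have heq : π φ v - π (χ' * φ) v = π (φ - χ' * φ) v := by
              rw [map_sub, ContinuousLinearMap.sub_apply]
            calc ‖B y (π φ v - π (χ' * φ) v)‖
                ≤ ‖B y‖ * ‖π φ v - π (χ' * φ) v‖ := ContinuousLinearMap.le_opNorm _ _
              _ ≤ M * (2 * ε * ‖v‖) := by
                  refine mul_le_mul (hM y) ?_ (norm_nonneg _) hM0
                  rw [heq]
                  calc ‖π (φ - χ' * φ) v‖ ≤ ‖π (φ - χ' * φ)‖ * ‖v‖ :=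
                      ContinuousLinearMap.le_opNorm _ _
                    _ ≤ ‖φ - χ' * φ‖ * ‖v‖ :=
                        mul_le_mul_of_nonneg_right
                          (NonUnitalStarAlgHom.norm_apply_le π _) (norm_nonneg _)
                    _ ≤ 2 * ε * ‖v‖ :=
                        mul_le_mul_of_nonneg_right hsup (norm_nonneg _)
              _ = 2 * M * ε * ‖v‖ := by ring
  by_contra hne
  have hpos : 0 < ‖B y v‖ := norm_pos_iff.mpr hne
  have hco : 0 ≤ M * (1 + 2 * ‖v‖) := by positivity
  have hD : (0:ℝ) < 2 * (M * (1 + 2 * ‖v‖) + 1) := by positivity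
  have hεp : 0 < ‖B y v‖ / (2 * (M * (1 + 2 * ‖v‖) + 1)) := by positivity
  have h1 := hfin _ hεp
  have h2 : M * (‖B y v‖ / (2 * (M * (1 + 2 * ‖v‖) + 1))) +
      2 * M * (‖B y v‖ / (2 * (M * (1 + 2 * ‖v‖) + 1))) * ‖v‖ =
      (M * (1 + 2 * ‖v‖)) * (‖B y v‖ / (2 * (M * (1 + 2 * ‖v‖) + 1))) := by ring
  have h3 : (M * (1 + 2 * ‖v‖)) * (‖B y v‖ / (2 * (M * (1 + 2 * ‖v‖) + 1))) <
      (2 * (M * (1 + 2 * ‖v‖) + 1)) * (‖B y v‖ / (2 * (M * (1 + 2 * ‖v‖) + 1))) :=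
    mul_lt_mul_of_pos_right (by linarith) hεp
  have h4 : (2 * (M * (1 + 2 * ‖v‖) + 1)) * (‖B y v‖ / (2 * (M * (1 + 2 * ‖v‖) + 1))) =
      ‖B y v‖ := by
    rw [mul_comm]
    exact div_mul_cancel₀ _ hD.ne'
  linarith
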